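/- Let A be a unital C*-algebra, let φ be a positive linear functional on A with φ(1) ≤ 1, and let p, q ∈ A be projections. Then φ(q) ≤ φ(p) + 7·(φ( ((1−p) q (1−p))² ))^{1/4}. -/

import Mathlib

open ComplexOrder

lemma my_cs {A : Type*} [CStarAlgebra A] [PartialOrder A] [StarOrderedRing A]
    (φ : A →ₗ[ℂ] ℂ) (hφ : ∀ b : A, 0 ≤ b → 0 ≤ φ b) (a b : A) :
    ‖φ (star a * b)‖ ^ 2 ≤ (φ (star a * a)).re * (φ (star b * b)).re := by
  have elem : ∀ c : ℂ, star (a + c • b) * (a + c • b)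
      = star a * a + c • (star a * b) + (star c) • (star b * a) + (c * star c) • (star b * b) := by
    intro c
    simp only [star_add, star_smul, add_mul, mul_add, smul_mul_assoc, mul_smul_comm, smul_smul, smul_add]
    abel
  have key : ∀ c : ℂ, 0 ≤ φ (star a * a) + c * φ (star a * b) + (star c) * φ (star b * a)
      + (c * star c) * φ (star b * b) := by
    intro c
    have h := hφ _ (star_mul_self_nonneg (a + c • b))
    rw [elem c] at h
    simpa [map_add, map_smul, smul_eq_mul] using h
  have hW := Complex.le_def.mp (hφ _ (star_mul_self_nonneg a))
  have hZ := Complex.le_def.mp (hφ _ (star_mul_self_nonneg b))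
  set W := φ (star a * a) with hWd
  set X := φ (star a * b) with hXd
  set Y := φ (star b * a) with hYd
  set Z := φ (star b * b) with hZd
  have hWi : W.im = 0 := by simpa using hW.2.symm
  have hZi : Z.im = 0 := by simpa using hZ.2.symm
  have hWr : 0 ≤ W.re := by simpa using hW.1
  have hZr : 0 ≤ Z.re := by simpa using hZ.1
  -- imaginary parts at c = 1 and c = I give conj-symmetry
  have e1 : (W + 1 * X + star (1:ℂ) * Y + (1 * star (1:ℂ)) * Z).im = 0 :=
    ((Complex.le_def.mp (key 1)).2).symm
  have eI : (W + Complex.I * X + star Complex.I * Y + (Complex.I * star Complex.I) * Z).im = 0 :=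
    ((Complex.le_def.mp (key Complex.I)).2).symm
  simp [Complex.add_im, Complex.mul_im, Complex.star_def, hWi, hZi] at e1 eI
  -- e1 : X.im + Y.im = 0 (some form), eI : relation of re parts
  have hsym_re : Y.re = X.re := by nlinarith [e1, eI]
  have hsym_im : Y.im = -X.im := by nlinarith [e1, eI]
  have hre : ∀ t : ℝ, 0 ≤ (Z.re * (X.re * X.re + X.im * X.im)) * (t * t)
      + (-(2 * (X.re * X.re + X.im * X.im))) * t + W.re := by
    intro t
    have h := (Complex.le_def.mp (key (-(t : ℂ) * (starRingEnd ℂ) X))).1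
    simp only [Complex.add_re, Complex.mul_re, Complex.mul_im, Complex.neg_re, Complex.neg_im,
      Complex.ofReal_re, Complex.ofReal_im, Complex.conj_re, Complex.conj_im, Complex.star_def,
      Complex.zero_re, hWi, hZi, hsym_re, hsym_im] at h
    nlinarith [h]
  have hd := discrim_le_zero hre
  rw [discrim] at hd
  have hN : 0 ≤ X.re * X.re + X.im * X.im := by nlinarith [sq_nonneg X.re, sq_nonneg X.im]
  rw [Complex.sq_norm, Complex.normSq_apply]
  rcases eq_or_lt_of_le hN with h0 | h0
  · nlinarith [h0]
  · nlinarith [hd, h0]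


section helpers

variable {A : Type*} [CStarAlgebra A] [PartialOrder A] [StarOrderedRing A]
  (φ : A →ₗ[ℂ] ℂ)

lemma my_mono (hφ : ∀ b : A, 0 ≤ b → 0 ≤ φ b) {a b : A} (h : a ≤ b) :
    (φ a).re ≤ (φ b).re := by
  have h2 := (Complex.le_def.mp (hφ _ (sub_nonneg.mpr h))).1
  rw [map_sub] at h2
  simp only [Complex.sub_re, Complex.zero_re] at h2
  linarith

end helpers

/-- For a positive linear functional `φ` with `φ(1) ≤ 1` on a unital C*-algebra and
projections `p, q`: `φ(q) ≤ φ(p) + 7·(φ(((1−p) q (1−p))²))^{1/4}`. -/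
theorem stmt6 {A : Type*} [CStarAlgebra A] [PartialOrder A] [StarOrderedRing A]
    (φ : A →ₗ[ℂ] ℂ) (hφ : ∀ b : A, 0 ≤ b → 0 ≤ φ b) (hφ1 : φ 1 ≤ 1)
    (p : A) (hp_sa : p = star p) (hp_idem : p * p = p)
    (q : A) (hq_sa : q = star q) (hq_idem : q * q = q) :
    (φ q).re ≤ (φ p).re + 7 * (φ (((1 - p) * q * (1 - p)) ^ 2)).re ^ ((1 : ℝ) / 4) := by
  have my_cs : ∀ a b : A, ‖φ (star a * b)‖ ^ 2
      ≤ (φ (star a * a)).re * (φ (star b * b)).re := fun a b => my_cs φ hφ a b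
  set r : A := 1 - p with hr
  have hr_sa : star r = r := by rw [hr, star_sub, star_one, ← hp_sa]
  have hr_idem : r * r = r := by rw [hr]; noncomm_ring; rw [hp_idem]; abel
  -- basic positivity of projections
  have proj_nonneg : ∀ e : A, e = star e → e * e = e → 0 ≤ e := by
    intro e hsa hid
    have := star_mul_self_nonneg e
    rwa [← hsa, hid] at this
  have proj_le_one : ∀ e : A, e = star e → e * e = e → e ≤ 1 := by
    intro e hsa hid
    have h1 : (1 - e) = star (1 - e) := by rw [star_sub, star_one, ← hsa]
    have h2 : (1 - e) * (1 - e) = 1 - e := by noncomm_ring; rw [hid]; abel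
    exact sub_nonneg.mp (proj_nonneg _ h1 h2)
  have hq0 : 0 ≤ q := proj_nonneg q hq_sa hq_idem
  have hp0 : 0 ≤ p := proj_nonneg p hp_sa hp_idem
  have hq1 : q ≤ 1 := proj_le_one q hq_sa hq_idem
  have hr1 : r ≤ 1 := proj_le_one r hr_sa.symm hr_idem
  -- conjugation by a self-adjoint element
  have conj_le : ∀ (c x y : A), star c = c → x ≤ y → c * x * c ≤ c * y * c := by
    intro c x y hc h
    have := star_left_conjugate_le_conjugate h c
    rwa [hc] at this
  have hpqp_le_p : p * q * p ≤ p := by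
    have := conj_le p q 1 hp_sa.symm hq1
    rwa [mul_one, hp_idem] at this
  have hqrq_le_q : q * r * q ≤ q := by
    have := conj_le q r 1 hq_sa.symm hr1
    rwa [mul_one, hq_idem] at this
  set x : A := r * q * r with hx
  have hx_le_r : x ≤ r := by
    have := conj_le r q 1 hr_sa hq1
    rwa [mul_one, hr_idem] at this
  have hx_le_one : x ≤ 1 := hx_le_r.trans hr1
  have hxx_le_x : x * x ≤ x := by
    have e : x * x = r * (q * r * q) * r := by
      rw [hx]
      rw [show r * q * r * (r * q * r) = r * q * (r * r) * (q * r) by noncomm_ring, hr_idem]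
      noncomm_ring
    rw [e]
    exact conj_le r _ q hr_sa hqrq_le_q
  -- star computations for CS
  have E1 : star (q * p) * (q * p) = p * q * p := by
    rw [star_mul, ← hp_sa, ← hq_sa,
      show p * q * (q * p) = p * (q * q) * p by noncomm_ring, hq_idem]
  have E2 : star (q * r) * (q * r) = r * q * r := by
    rw [star_mul, hr_sa, ← hq_sa,
      show r * q * (q * r) = r * (q * q) * r by noncomm_ring, hq_idem]
  have E3 : star (q * p) * (q * r) = p * q * r := by
    rw [star_mul, ← hp_sa, ← hq_sa,
      show p * q * (q * r) = p * (q * q) * r by noncomm_ring, hq_idem]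
  have E4 : star (q * r) * (q * p) = r * q * p := by
    rw [star_mul, hr_sa, ← hq_sa,
      show r * q * (q * p) = r * (q * q) * p by noncomm_ring, hq_idem]
  have hx_sa : star x = x := by
    rw [hx, star_mul, star_mul, hr_sa, ← hq_sa, ← mul_assoc]
  -- monotonicity of re ∘ φ
  have mono : ∀ {u v : A}, u ≤ v → (φ u).re ≤ (φ v).re := fun h => my_mono φ hφ h
  have nonneg : ∀ {u : A}, 0 ≤ u → 0 ≤ (φ u).re := by
    intro u hu
    have := mono hu
    simpa using this
  have hφ1re : (φ 1).re ≤ 1 := by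
    have := (Complex.le_def.mp hφ1).1
    simpa using this
  -- real quantities
  set t : ℝ := (φ (x * x)).re with ht
  set s : ℝ := (φ x).re with hs
  have hxx0 : (0:A) ≤ x * x := by
    have := star_mul_self_nonneg x
    rwa [hx_sa] at this
  have ht0 : 0 ≤ t := nonneg hxx0
  have ht1 : t ≤ 1 := (mono (hxx_le_x.trans hx_le_one)).trans hφ1re
  have hx0 : (0:A) ≤ x := by
    have := conj_le r 0 q hr_sa hq0
    rwa [mul_zero, zero_mul] at this
  have hs0 : 0 ≤ s := nonneg hx0
  have hs1 : s ≤ 1 := (mono hx_le_one).trans hφ1re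
  -- CS: s^2 ≤ t
  have hst : s ^ 2 ≤ t := by
    have h := my_cs x 1
    rw [mul_one, hx_sa, star_one, mul_one] at h
    have h2 : ‖φ x‖ ^ 2 ≤ t := by
      calc ‖φ x‖ ^ 2 ≤ t * (φ 1).re := h
        _ ≤ t * 1 := by nlinarith
        _ = t := mul_one t
    have h3 : s ≤ ‖φ x‖ := Complex.re_le_norm _
    nlinarith [norm_nonneg (φ x)]
  -- corner bound
  have hA1 : (φ (p * q * p)).re ≤ (φ p).re := mono hpqp_le_p
  have hA1le1 : (φ (p * q * p)).re ≤ 1 := (hA1.trans (mono (proj_le_one p hp_sa hp_idem))).trans hφ1re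
  have hA1nn : 0 ≤ (φ (p * q * p)).re := by
    have : (0:A) ≤ p * q * p := by
      have := conj_le p 0 q hp_sa.symm hq0
      rwa [mul_zero, zero_mul] at this
    exact nonneg this
  -- cross bounds
  have cross1 : (φ (p * q * r)).re ≤ Real.sqrt s := by
    have h := my_cs (q * p) (q * r)
    rw [E3, E1, E2, ← hx] at h
    have h2 : ‖φ (p * q * r)‖ ^ 2 ≤ s := by nlinarith
    have := Complex.re_le_norm (φ (p * q * r))
    have h3 : ‖φ (p * q * r)‖ ≤ Real.sqrt s :=
      Real.le_sqrt_of_sq_le h2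
    linarith
  have cross2 : (φ (r * q * p)).re ≤ Real.sqrt s := by
    have h := my_cs (q * r) (q * p)
    rw [E4, E2, E1, ← hx] at h
    have h2 : ‖φ (r * q * p)‖ ^ 2 ≤ s := by nlinarith
    have := Complex.re_le_norm (φ (r * q * p))
    have h3 : ‖φ (r * q * p)‖ ≤ Real.sqrt s :=
      Real.le_sqrt_of_sq_le h2
    linarith
  -- decomposition
  have hdec : q = p * q * p + p * q * r + r * q * p + r * q * r := by
    rw [hr]; noncomm_ring
  have hdecφ : (φ q).re = (φ (p * q * p)).re + (φ (p * q * r)).re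
      + (φ (r * q * p)).re + (φ (r * q * r)).re := by
    have : φ q = φ (p * q * p) + φ (p * q * r) + φ (r * q * p) + φ (r * q * r) := by
      conv_lhs => rw [hdec]
      simp [map_add]
    rw [this]
    simp [Complex.add_re]
  -- rpow bookkeeping
  set u : ℝ := t ^ ((1:ℝ)/4) with hu
  have hu_eq : u = Real.sqrt (Real.sqrt t) := by
    rw [hu, show (1:ℝ)/4 = (1/2) * (1/2) by norm_num, Real.rpow_mul ht0,
      ← Real.sqrt_eq_rpow, ← Real.sqrt_eq_rpow]
  have hsqrt_t_le_u : Real.sqrt t ≤ u := by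
    rw [hu_eq]
    apply Real.sqrt_le_sqrt
    exact Real.le_sqrt_of_sq_le (by nlinarith)
  have hsqrt_s_le_u : Real.sqrt s ≤ u := by
    rw [hu_eq]
    apply Real.sqrt_le_sqrt
    exact Real.le_sqrt_of_sq_le hst
  have hu0 : 0 ≤ u := Real.rpow_nonneg ht0 _
  have hsx : (φ x).re ≤ u := by
    have : s ≤ Real.sqrt t := Real.le_sqrt_of_sq_le hst
    calc (φ x).re = s := rfl
      _ ≤ Real.sqrt t := this
      _ ≤ u := hsqrt_t_le_u
  have goal_pow : (φ (((1 - p) * q * (1 - p)) ^ 2)).re = t := by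
    rw [pow_two, ← hr, ← hx]
  rw [goal_pow]
  have : (φ (r * q * r)).re = s := rfl
  rw [hdecφ, this]
  have hssqrt : Real.sqrt s ≤ u := hsqrt_s_le_u
  linarith [cross1, cross2, hA1, hsx]
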